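/- For any λ in the resolvent set of A one has the equality of unbounded operators L(A,a,b,κ) − λI = L(A − λI, a, b, κ(λ)), where κ(λ) : ℂⁿ → ℂⁿ is given by κ(λ)c = κc + λ·(⟨A(A−λ)⁻¹ãc, b̃e_j⟩)_{j=1}^n (i.e., κ(λ) = κ + λ·b*(A−λ)⁻¹A⁻¹a), and on the right-hand side a and b are regarded as n-data for A − λI via the maps (A−λ)⁻¹a = (A−λ)⁻¹Aã and ((A−λ)*)⁻¹b = ((A−λ)*)⁻¹A*b̃. -/

import Mathlib

open Complex

noncomputable section

variable {H : Type*} [NormedAddCommGroup H] [InnerProductSpace ℂ H] [CompleteSpace H]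

/-- The graph of the singular perturbation `L(T, a, b, κ)` of an (unbounded) operator with
domain `dom` and action `Tfun`, built from the `n`-data `(ã, b̃, κ)`:
pairs `(y₀ + ãc, T y₀)` with `y₀ ∈ dom`, `c ∈ ℂⁿ` and `κc + (⟨T y₀, b̃ e_j⟩)_j = 0`. -/
def pertGraph (n : ℕ) (dom : Submodule ℂ H) (Tfun : dom → H)
    (aT bT : (Fin n → ℂ) →ₗ[ℂ] H) (κ : Matrix (Fin n) (Fin n) ℂ) : Set (H × H) :=
  {p | ∃ (y₀ : dom) (c : Fin n → ℂ),
    p.1 = (y₀ : H) + aT c ∧ p.2 = Tfun y₀ ∧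
    ∀ j, κ.mulVec c j + inner (𝕜 := ℂ) (bT (Pi.single j 1)) (Tfun y₀) = 0}

/-- Condition `(Aₙ)` on the `n`-data `(ã, b̃, κ)` for the operator `A`:
if `ãc ∈ D(A)` and `κc = (⟨A(ãc), b̃e_j⟩)_j`, then `c = 0`. -/
def CondA (n : ℕ) (A : H →ₗ.[ℂ] H)
    (aT bT : (Fin n → ℂ) →ₗ[ℂ] H) (κ : Matrix (Fin n) (Fin n) ℂ) : Prop :=
  ∀ (c : Fin n → ℂ) (h : aT c ∈ A.domain),
    (∀ j, κ.mulVec c j = inner (𝕜 := ℂ) (bT (Pi.single j 1)) (A ⟨aT c, h⟩)) → c = 0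

/-- `dim (G / (G ∩ G')) = n`, where the intersection is viewed inside `G`. -/
def QuotRankEq (G G' : Submodule ℂ (H × H)) (n : ℕ) : Prop :=
  Module.rank ℂ (↥G ⧸ (G ⊓ G').comap G.subtype) = (n : Cardinal)

/-- `L` is a balanced rank `n` singular perturbation of `A` (in terms of their graphs). -/
def IsBalancedPert (n : ℕ) (Ga Gl : Submodule ℂ (H × H)) : Prop :=
  QuotRankEq Ga Gl n ∧ QuotRankEq Gl Ga n

lemma lin_sum_single {n : ℕ} {M : Type*} [AddCommMonoid M] [Module ℂ M]
    (f : (Fin n → ℂ) →ₗ[ℂ] M) (c : Fin n → ℂ) :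
    f c = ∑ i, c i • f (Pi.single i 1) := by
  conv_lhs => rw [← Finset.univ_sum_single c]
  rw [map_sum]
  refine Finset.sum_congr rfl fun i _ => ?_
  rw [← map_smul]
  congr 1
  simp [← Pi.single_smul, smul_eq_mul]

/-- **Proposition.** For `λ` in the resolvent set of `A`,
`L(A,a,b,κ) − λI = L(A − λI, a, b, κ(λ))`, where
`κ(λ) = κ + λ·b*(A−λ)⁻¹A⁻¹a` and the n-data for `A − λI` are obtained from
`ã_λ = ã + λ(A−λ)⁻¹ã` and `b̃_λ = b̃ + conj(λ)((A−λ)⁻¹)*b̃`. -/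
theorem pert_shift_by_lambda
    (n : ℕ) (A : H →ₗ.[ℂ] H)
    (hdense : Dense (A.domain : Set H))
    (hclosed : IsClosed (A.graph : Set (H × H)))
    -- 0 lies in the resolvent set of A
    (Ainv : H →L[ℂ] H)
    (hAinv1 : ∀ x : A.domain, Ainv (A x) = (x : H))
    (hAinv2 : ∀ v : H, ∃ h : Ainv v ∈ A.domain, A ⟨Ainv v, h⟩ = v)
    -- the n-data
    (aT bT : (Fin n → ℂ) →ₗ[ℂ] H) (κ : Matrix (Fin n) (Fin n) ℂ)
    (haInj : Function.Injective aT) (hbInj : Function.Injective bT)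
    (hA_n : CondA n A aT bT κ)
    -- λ lies in the resolvent set of A, with resolvent Rlam = (A − λ)⁻¹
    (lam : ℂ) (Rlam : H →L[ℂ] H)
    (hR1 : ∀ x : A.domain, Rlam (A x - lam • (x : H)) = (x : H))
    (hR2 : ∀ v : H, ∃ h : Rlam v ∈ A.domain, A ⟨Rlam v, h⟩ - lam • Rlam v = v) :
    -- the graph of L(A,a,b,κ) − λI coincides with the graph of L(A−λI, a, b, κ(λ))
    {p : H × H | (p.1, p.2 + lam • p.1) ∈ pertGraph n A.domain (fun y₀ => A y₀) aT bT κ}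
      = pertGraph n A.domain (fun y₀ => A y₀ - lam • (y₀ : H))
          (aT + lam • (Rlam.toLinearMap.comp aT))
          (bT + (starRingEnd ℂ lam) • ((ContinuousLinearMap.adjoint Rlam).toLinearMap.comp bT))
          (Matrix.of fun j i => κ j i
            + lam * inner (𝕜 := ℂ) (bT (Pi.single j 1))
                (aT (Pi.single i 1) + lam • Rlam (aT (Pi.single i 1)))) := by
  have hM : ∀ (c : Fin n → ℂ) (j : Fin n),
      (Matrix.of fun j i => κ j i
          + lam * inner (𝕜 := ℂ) (bT (Pi.single j 1))
              (aT (Pi.single i 1) + lam • Rlam (aT (Pi.single i 1)))).mulVec c j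
        = κ.mulVec c j
          + lam * inner (𝕜 := ℂ) (bT (Pi.single j 1)) (aT c + lam • Rlam (aT c)) := by
    intro c j
    have key : inner (𝕜 := ℂ) (bT (Pi.single j 1)) (aT c + lam • Rlam (aT c))
        = ∑ i, c i * inner (𝕜 := ℂ) (bT (Pi.single j 1))
            (aT (Pi.single i 1) + lam • Rlam (aT (Pi.single i 1))) := by
      have := lin_sum_single ((innerSL ℂ (bT (Pi.single j 1))).toLinearMap.comp
        (aT + lam • (Rlam.toLinearMap.comp aT))) c
      simp [smul_eq_mul] at this
      exact this
    simp only [Matrix.mulVec, dotProduct, Matrix.of_apply, key, Finset.mul_sum]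
    rw [← Finset.sum_add_distrib]
    exact Finset.sum_congr rfl fun i _ => by ring
  have hb : ∀ (j : Fin n) (w : H),
      inner (𝕜 := ℂ) ((bT + (starRingEnd ℂ lam)
          • ((ContinuousLinearMap.adjoint Rlam).toLinearMap.comp bT)) (Pi.single j 1)) w
        = inner (𝕜 := ℂ) (bT (Pi.single j 1)) w
          + lam * inner (𝕜 := ℂ) (bT (Pi.single j 1)) (Rlam w) := by
    intro j w
    simp [inner_add_left, inner_smul_left, ContinuousLinearMap.adjoint_inner_left]
    ring
  ext ⟨x, y⟩
  simp only [pertGraph, Set.mem_setOf_eq]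
  constructor
  · rintro ⟨y₀, c, hx, hy, hcond⟩
    obtain ⟨hmem, hAv⟩ := hR2 (aT c)
    set z : A.domain := ⟨Rlam (aT c), hmem⟩ with hz
    have hAz : A ⟨Rlam (aT c), hmem⟩ = aT c + lam • Rlam (aT c) := sub_eq_iff_eq_add.mp hAv
    refine ⟨y₀ - lam • z, c, ?_, ?_, ?_⟩
    · simp only [Submodule.coe_sub, Submodule.coe_smul, LinearMap.add_apply,
        LinearMap.smul_apply, LinearMap.coe_comp, ContinuousLinearMap.coe_coe,
        Function.comp_apply, hz, hx]
      module
    · have hy' : y = A y₀ - lam • x := by rw [← hy]; abel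
      simp only [hy', hx, LinearPMap.map_sub, LinearPMap.map_smul, hAz,
        Submodule.coe_sub, Submodule.coe_smul, hz]
      module
    · intro j
      rw [hb]
      rw [hR1 (y₀ - lam • z)]
      rw [hM]
      simp only [LinearPMap.map_sub, LinearPMap.map_smul, hAz, Submodule.coe_sub,
        Submodule.coe_smul, hz, inner_sub_right, inner_add_right, inner_smul_right]
      have h := hcond j
      push_cast at h ⊢
      linear_combination h
  · rintro ⟨y₀', c, hx, hy, hcond⟩
    obtain ⟨hmem, hAv⟩ := hR2 (aT c)
    set z : A.domain := ⟨Rlam (aT c), hmem⟩ with hz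
    have hAz : A ⟨Rlam (aT c), hmem⟩ = aT c + lam • Rlam (aT c) := sub_eq_iff_eq_add.mp hAv
    refine ⟨y₀' + lam • z, c, ?_, ?_, ?_⟩
    · simp only [Submodule.coe_add, Submodule.coe_smul, hz] at hx ⊢
      simp only [LinearMap.add_apply, LinearMap.smul_apply, LinearMap.coe_comp,
        ContinuousLinearMap.coe_coe, Function.comp_apply] at hx
      rw [hx]; module
    · simp only [LinearPMap.map_add, LinearPMap.map_smul, hAz, Submodule.coe_add,
        Submodule.coe_smul, hz, hy, hx]
      simp only [LinearMap.add_apply, LinearMap.smul_apply, LinearMap.coe_comp,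
        ContinuousLinearMap.coe_coe, Function.comp_apply]
      module
    · intro j
      have h := hcond j
      rw [hb, hR1 y₀', hM] at h
      simp only [LinearPMap.map_add, LinearPMap.map_smul, hAz, Submodule.coe_add,
        Submodule.coe_smul, hz, inner_add_right, inner_smul_right,
        inner_sub_right] at h ⊢
      linear_combination h


end
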